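/- For ξ > 0 and β₀ > 0, the minimum over 0 < λ < 1+ξ of (1 + ξ + β₀λ²)/(1 + β₀λ) equals 2(1+ξ)/(√(1+(1+ξ)β₀)+1), attained at λ = (√(1+(1+ξ)β₀)−1)/β₀. -/

import Mathlib

/-- For `ξ > 0` and `β₀ > 0`, the minimum over `0 < λ < 1+ξ` of
`(1 + ξ + β₀λ²)/(1 + β₀λ)` equals `2(1+ξ)/(√(1+(1+ξ)β₀)+1)`, attained at
`λ = (√(1+(1+ξ)β₀)−1)/β₀`. -/
theorem stmt_4 (ξ β₀ : ℝ) (hξ : 0 < ξ) (hβ : 0 < β₀) :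
    (Real.sqrt (1 + (1 + ξ) * β₀) - 1) / β₀ ∈ Set.Ioo 0 (1 + ξ) ∧
    (1 + ξ + β₀ * ((Real.sqrt (1 + (1 + ξ) * β₀) - 1) / β₀) ^ 2) /
        (1 + β₀ * ((Real.sqrt (1 + (1 + ξ) * β₀) - 1) / β₀)) =
      2 * (1 + ξ) / (Real.sqrt (1 + (1 + ξ) * β₀) + 1) ∧
    ∀ l ∈ Set.Ioo (0:ℝ) (1 + ξ),
      2 * (1 + ξ) / (Real.sqrt (1 + (1 + ξ) * β₀) + 1) ≤
        (1 + ξ + β₀ * l ^ 2) / (1 + β₀ * l) := by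
  set s := Real.sqrt (1 + (1 + ξ) * β₀) with hs
  have hs2 : s ^ 2 = 1 + (1 + ξ) * β₀ := Real.sq_sqrt (by nlinarith)
  have hs0 : 0 ≤ s := Real.sqrt_nonneg _
  have hs1 : 1 < s := by nlinarith
  have hkey : β₀ * ((s - 1) / β₀) = s - 1 := by field_simp
  refine ⟨⟨div_pos (by linarith) hβ, ?_⟩, ?_, ?_⟩
  · rw [div_lt_iff₀ hβ]; nlinarith
  · have h2 : β₀ * ((s - 1) / β₀) ^ 2 = (s - 1) ^ 2 / β₀ := by
      field_simp
    rw [h2, hkey, div_eq_div_iff (by linarith) (by linarith)]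
    field_simp
    nlinarith
  · rintro l ⟨hl0, hl1⟩
    rw [div_le_div_iff₀ (by linarith) (by nlinarith)]
    nlinarith [sq_nonneg (β₀ * l - (s - 1)), mul_pos hβ hl0]
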